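/- Let B be a real V×E matrix, m ≥ 0, and H = [[m I_V, B], [Bᵀ, −m I_E]]. Suppose u ∈ ℝ^V, v ∈ ℝ^E, σ > 0 satisfy B v = σ u and Bᵀ u = σ v, and set E₊ = √(σ² + m²) and k = σ/(E₊ + m). Then the spinor ψ⁺ = (u, k v) is an eigenstate of H with energy E₊: H ψ⁺ = E₊ ψ⁺. -/
import Mathlib

open Matrix

/-- Let `H = [[m I_V, B], [Bᵀ, -m I_E]]` with mass `m ≥ 0`, and let
`u, v, σ` (with `σ > 0`) form a singular pair of `B` (`B v = σ u`, `Bᵀ u = σ v`).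
With `E₊ = √(σ² + m²)` and `k = σ / (E₊ + m)`, the spinor `ψ⁺ = (u, k v)` is an
eigenstate of `H` with energy `E₊`: `H ψ⁺ = E₊ ψ⁺`. -/
theorem massive_dirac_positive_eigenstate (V E : ℕ)
    (B : Matrix (Fin V) (Fin E) ℝ) (m : ℝ) (hm : 0 ≤ m)
    (H : Matrix (Fin V ⊕ Fin E) (Fin V ⊕ Fin E) ℝ)
    (hH : H = Matrix.fromBlocks (m • (1 : Matrix (Fin V) (Fin V) ℝ)) B Bᵀ
      (-(m • (1 : Matrix (Fin E) (Fin E) ℝ))))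
    (u : Fin V → ℝ) (v : Fin E → ℝ) (σ : ℝ) (hσ : 0 < σ)
    (hBv : B.mulVec v = σ • u) (hBu : Bᵀ.mulVec u = σ • v)
    (Ep k : ℝ) (hEp : Ep = Real.sqrt (σ ^ 2 + m ^ 2)) (hk : k = σ / (Ep + m)) :
    H.mulVec (Sum.elim u (k • v)) = Ep • Sum.elim u (k • v) := by
  have hEp0 : σ ≤ Ep := by
    rw [hEp]
    calc σ = Real.sqrt (σ ^ 2) := by rw [Real.sqrt_sq hσ.le]
      _ ≤ Real.sqrt (σ ^ 2 + m ^ 2) := Real.sqrt_le_sqrt (by nlinarith)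
  have hEpm : 0 < Ep + m := by linarith
  have hEpsq : Ep ^ 2 = σ ^ 2 + m ^ 2 := by
    rw [hEp, Real.sq_sqrt (by nlinarith)]
  have hkσ : k * σ = Ep - m := by
    rw [hk]; field_simp; nlinarith
  have hkE : σ - m * k = Ep * k := by
    rw [hk]; field_simp; nlinarith
  subst hH
  rw [fromBlocks_mulVec]
  have h1 : (Sum.elim u (k • v)) ∘ Sum.inl = u := rfl
  have h2 : (Sum.elim u (k • v)) ∘ Sum.inr = k • v := rfl
  rw [h1, h2]
  ext i
  cases i with
  | inl i =>
    simp only [Sum.elim_inl, Pi.smul_apply, Pi.add_apply, smul_mulVec,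
      one_mulVec, Matrix.mulVec_smul, hBv, Pi.smul_apply, smul_eq_mul]
    ring_nf
    nlinarith [congrArg (· * u i) hkσ]
  | inr i =>
    simp only [Sum.elim_inr, Pi.smul_apply, Pi.add_apply, neg_mulVec,
      smul_mulVec, one_mulVec, Matrix.mulVec_smul, hBu, Pi.neg_apply,
      Pi.smul_apply, smul_eq_mul]
    nlinarith [congrArg (· * v i) hkE]
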